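/- Let U ⊆ ℂ be open, C > 0 a real constant, φ : U → ℝ a real-differentiable function with |φ(z)| < C on U, and F : U → ℂ nonvanishing, such that ∂_zφ(z) = (C² − φ(z)²)/F(z) for all z ∈ U. Define h : U → ℝ by h = (1/(2C))·log((C + φ)/(C − φ)). Then for all z ∈ U one has ∂_z h(z) = 1/F(z) and ∂_z̄ h(z) = 1/conj(F(z)); consequently dh = 2Re(dz/F), i.e. the real part of the one-form dz/F is exact on U with primitive h. -/

import Mathlib

/-- The Wirtinger derivative `∂_z = ½(∂/∂x - i ∂/∂y)` of a complex-valued function on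
`ℂ ≃ ℝ²`, computed via the real Fréchet derivative. -/
noncomputable def dzW (φ : ℂ → ℂ) (z : ℂ) : ℂ :=
  (1 / 2 : ℂ) * (fderiv ℝ φ z 1 - Complex.I * fderiv ℝ φ z Complex.I)

/-- The Wirtinger derivative `∂_z̄ = ½(∂/∂x + i ∂/∂y)` of a complex-valued function on
`ℂ ≃ ℝ²`, computed via the real Fréchet derivative. -/
noncomputable def dzbar (φ : ℂ → ℂ) (z : ℂ) : ℂ :=
  (1 / 2 : ℂ) * (fderiv ℝ φ z 1 + Complex.I * fderiv ℝ φ z Complex.I)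

/-- Let `U ⊆ ℂ` be open, `C > 0`, `φ : U → ℝ` real-differentiable with
`|φ| < C`, and `F` nonvanishing with `∂_zφ = (C² - φ²)/F` on `U`. Then
`h = (1/(2C))·log((C + φ)/(C - φ))` satisfies `∂_z h = 1/F` and `∂_z̄ h = 1/conj(F)` on `U`;
consequently `dh = 2 Re(dz/F)`, i.e. the real part of the one-form `dz/F` is exact on `U`
with primitive `h`. -/
theorem stmt_12 (U : Set ℂ) (hU : IsOpen U) (C : ℝ) (hC : 0 < C)
    (φ : ℂ → ℝ) (hφdiff : DifferentiableOn ℝ φ U) (hφ : ∀ z ∈ U, |φ z| < C)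
    (F : ℂ → ℂ) (hF : ∀ z ∈ U, F z ≠ 0)
    (hdz : ∀ z ∈ U, dzW (fun w => ((φ w : ℝ) : ℂ)) z = ((C ^ 2 - φ z ^ 2 : ℝ) : ℂ) / F z) :
    ∀ z ∈ U,
      dzW (fun w =>
        ((1 / (2 * C) * Real.log ((C + φ w) / (C - φ w)) : ℝ) : ℂ)) z = 1 / F z ∧
      dzbar (fun w =>
        ((1 / (2 * C) * Real.log ((C + φ w) / (C - φ w)) : ℝ) : ℂ)) z
        = 1 / (starRingEnd ℂ) (F z) := by
  intro z hz
  obtain ⟨hlo, hhi⟩ := abs_lt.mp (hφ z hz)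
  have h1 : (0:ℝ) < C + φ z := by linarith
  have h2 : (0:ℝ) < C - φ z := by linarith
  have hc0 : (C^2 - φ z^2 : ℝ) ≠ 0 := by nlinarith
  have hφz : DifferentiableAt ℝ φ z := (hφdiff z hz).differentiableAt (hU.mem_nhds hz)
  set L := fderiv ℝ φ z with hLdef
  have hL : HasFDerivAt φ L z := hφz.hasFDerivAt
  have hD0 := ((((hL.const_add C).log h1.ne').sub ((hL.const_sub C).log h2.ne')).const_mul
      (1/(2*C)))
  have hD : HasFDerivAt (fun w => 1/(2*C) * (Real.log (C + φ w) - Real.log (C - φ w)))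
      (((C^2 - φ z^2)⁻¹ : ℝ) • L) z := by
    refine hD0.congr_fderiv ?_
    ext v
    simp only [ContinuousLinearMap.smul_apply, ContinuousLinearMap.coe_sub',
      ContinuousLinearMap.coe_smul', Pi.sub_apply, Pi.smul_apply, ContinuousLinearMap.neg_apply,
      smul_eq_mul, smul_neg]
    field_simp
    ring
  have hDh : HasFDerivAt (fun w => 1/(2*C) * Real.log ((C + φ w) / (C - φ w)))
      (((C^2 - φ z^2)⁻¹ : ℝ) • L) z := by
    apply hD.congr_of_eventuallyEq
    filter_upwards [hU.mem_nhds hz] with w hw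
    obtain ⟨hlo', hhi'⟩ := abs_lt.mp (hφ w hw)
    rw [Real.log_div (by linarith) (by linarith)]
  have hDc : HasFDerivAt (fun w => ((1/(2*C) * Real.log ((C + φ w) / (C - φ w)) : ℝ) : ℂ))
      (Complex.ofRealCLM.comp (((C^2 - φ z^2)⁻¹ : ℝ) • L)) z :=
    Complex.ofRealCLM.hasFDerivAt.comp z hDh
  have hLc : HasFDerivAt (fun w => ((φ w : ℝ) : ℂ)) (Complex.ofRealCLM.comp L) z :=
    Complex.ofRealCLM.hasFDerivAt.comp z hL
  have key := hdz z hz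
  rw [dzW, hLc.fderiv] at key
  simp only [ContinuousLinearMap.coe_comp', Function.comp_apply, Complex.ofRealCLM_apply] at key
  set a : ℝ := L 1
  set b : ℝ := L Complex.I
  set c : ℂ := ((C^2 - φ z^2 : ℝ) : ℂ) with hcdef
  have hcne : c ≠ 0 := by rw [hcdef]; exact_mod_cast hc0
  have hFz := hF z hz
  have hFzc : (starRingEnd ℂ) (F z) ≠ 0 := by simpa using hFz
  have key2 : (1/2 : ℂ) * ((a:ℂ) + Complex.I * (b:ℂ)) = c / (starRingEnd ℂ) (F z) := by
    have h := congrArg (starRingEnd ℂ) key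
    simp only [map_mul, map_sub, map_div₀, Complex.conj_ofReal, map_one, map_ofNat,
      Complex.conj_I] at h
    rw [show (starRingEnd ℂ) c = c from by rw [hcdef]; exact Complex.conj_ofReal _] at h
    linear_combination h
  rw [eq_div_iff hFz] at key
  rw [eq_div_iff hFzc] at key2
  constructor
  · rw [dzW, hDc.fderiv]
    simp only [ContinuousLinearMap.coe_comp', Function.comp_apply,
      ContinuousLinearMap.smul_apply, smul_eq_mul, Complex.ofRealCLM_apply, Complex.ofReal_mul]
    have : ((((C^2 - φ z^2)⁻¹ : ℝ)) : ℂ) = c⁻¹ := by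
      rw [hcdef]; push_cast; ring
    rw [this]
    rw [eq_div_iff hFz, mul_comm]
    rw [show F z * ((1/2:ℂ) * (c⁻¹ * (a:ℂ) - Complex.I * (c⁻¹ * (b:ℂ))))
        = c⁻¹ * ((1/2:ℂ) * ((a:ℂ) - Complex.I * (b:ℂ)) * F z) from by ring, key]
    field_simp
  · rw [dzbar, hDc.fderiv]
    simp only [ContinuousLinearMap.coe_comp', Function.comp_apply,
      ContinuousLinearMap.smul_apply, smul_eq_mul, Complex.ofRealCLM_apply, Complex.ofReal_mul]
    have : ((((C^2 - φ z^2)⁻¹ : ℝ)) : ℂ) = c⁻¹ := by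
      rw [hcdef]; push_cast; ring
    rw [this]
    rw [eq_div_iff hFzc, mul_comm]
    rw [show (starRingEnd ℂ) (F z) * ((1/2:ℂ) * (c⁻¹ * (a:ℂ) + Complex.I * (c⁻¹ * (b:ℂ))))
        = c⁻¹ * ((1/2:ℂ) * ((a:ℂ) + Complex.I * (b:ℂ)) * (starRingEnd ℂ) (F z)) from by ring,
      key2]
    field_simp
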